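/- There exists a universal constant C > 0 with the following property. For every p ∈ [1, ∞], every ε ∈ (0, 1], and all bounded measurable maps u, w : 𝕋² → ℝ², writing û(x) = (u₁(x), u₂(x), 0) ∈ ℝ³ and ŵ(x) = (w₁(x), w₂(x), 0) ∈ ℝ³, one has ‖ x ↦ ‖ (M_{ε ŵ(x)} − M_{ε û(x)}) / (ε √(M₀)) ‖_{L²(ℝ³)} ‖_{L^p(𝕋²)} ≤ C · ‖w − u‖_{L^p(𝕋²)} · exp(ε² ‖u − w‖²_{L^∞(𝕋²)} + ε² ‖w‖²_{L^∞(𝕋²)}), where the inner L²(ℝ³) norm is taken in the velocity variable v. -/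

import Mathlib

open MeasureTheory
open scoped ENNReal

/-- The flat torus `𝕋² = ℝ²/ℤ²` is modelled by `ℤ²`-periodic functions on `ℝ × ℝ`,
with integration over the fundamental domain `[0,1]²` (total mass 1). -/
noncomputable def μT : Measure (ℝ × ℝ) := volume.restrict (Set.Icc ((0:ℝ), (0:ℝ)) (1, 1))

/-- `ℤ²`-periodicity. -/
def ZZper {α : Type*} (f : ℝ × ℝ → α) : Prop :=
  ∀ (x : ℝ × ℝ) (m n : ℤ), f (x + ((m : ℝ), (n : ℝ))) = f x

/-- `ℝ²` and `ℝ³` with the Euclidean norm. -/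
abbrev E2 : Type := EuclideanSpace ℝ (Fin 2)
abbrev E3 : Type := EuclideanSpace ℝ (Fin 3)

/-- The Maxwellian `M_b(v) = (2π)^{-3/2} exp(-|v-b|²/2)`. -/
noncomputable def maxw (b v : E3) : ℝ :=
  (2 * Real.pi) ^ (-(3:ℝ)/2) * Real.exp (-‖v - b‖ ^ 2 / 2)

/-- The embedding `(a₁, a₂) ↦ (a₁, a₂, 0)` of `ℝ²` into `ℝ³`. -/
noncomputable def emb (a : E2) : E3 :=
  EuclideanSpace.single 0 (a 0) + EuclideanSpace.single 1 (a 1)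

/-! ### Auxiliary material -/

open Real
open scoped RealInnerProductSpace

/-- The normalized Maxwellian `M_b/√M₀`. -/
noncomputable def gg (b v : E3) : ℝ :=
  (2 * Real.pi) ^ (-(3:ℝ)/4) * Real.exp (-(1/4) * ‖v‖^2 + ⟪b, v⟫ - ‖b‖^2/2)

lemma gauss_integrable (c : E3) :
    Integrable (fun v : E3 => rexp (-(1/2) * ‖v‖^2 + ⟪c, v⟫)) := by
  have h := (GaussianFourier.integrable_cexp_neg_mul_sq_norm_add
      (V := E3) (b := (1/2 : ℂ)) (by norm_num) 1 c).re
  refine h.congr (Filter.Eventually.of_forall fun v => ?_)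
  simp only [RCLike.re_to_complex]
  rw [show (-(1/2 : ℂ) * (‖v‖:ℂ)^2 + 1 * ((⟪c, v⟫ : ℝ) : ℂ))
      = ((-(1/2) * ‖v‖^2 + ⟪c, v⟫ : ℝ) : ℂ) by push_cast; ring,
    ← Complex.ofReal_exp, Complex.ofReal_re]

lemma gauss_integral (c : E3) :
    ∫ v : E3, rexp (-(1/2) * ‖v‖^2 + ⟪c, v⟫)
      = (2 * π) ^ ((3:ℝ)/2) * rexp (‖c‖^2 / 2) := by
  have h1 : ∀ v : E3, rexp (-(1/2) * ‖v‖^2 + ⟪c, v⟫)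
      = rexp (‖c‖^2/2) * rexp (-(1/2) * ‖v - c‖^2) := by
    intro v
    rw [← Real.exp_add]
    congr 1
    have h := norm_sub_sq_real v c
    have h2 : ⟪v, c⟫ = ⟪c, v⟫ := real_inner_comm c v
    nlinarith
  simp_rw [h1]
  rw [integral_const_mul _ _]
  have h3 : ∫ v : E3, rexp (-(1/2) * ‖v - c‖^2) = ∫ v : E3, rexp (-(1/2) * ‖v‖^2) :=
    integral_sub_right_eq_self (fun v : E3 => rexp (-(1/2) * ‖v‖^2)) c
  rw [h3, GaussianFourier.integral_rexp_neg_mul_sq_norm (by norm_num : (0:ℝ) < 1/2)]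
  have hrank : Module.finrank ℝ E3 = 3 := finrank_euclideanSpace_fin
  rw [hrank, show π / (1/2 : ℝ) = 2 * π by ring]
  rw [mul_comm]
  norm_num

lemma gg_mul (b b' : E3) (v : E3) : gg b v * gg b' v =
    ((2*π) ^ (-(3:ℝ)/2) * rexp (-(‖b‖^2 + ‖b'‖^2)/2))
      * rexp (-(1/2) * ‖v‖^2 + ⟪b + b', v⟫) := by
  unfold gg
  rw [inner_add_left, mul_mul_mul_comm, ← Real.rpow_add (by positivity),
    ← Real.exp_add, mul_assoc, ← Real.exp_add,
    show (-(3:ℝ)/4) + (-(3:ℝ)/4) = -(3:ℝ)/2 by norm_num]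
  congr 1
  ring

lemma gg_mul_integrable (b b' : E3) : Integrable (fun v : E3 => gg b v * gg b' v) := by
  simp_rw [gg_mul]
  exact (gauss_integrable (b + b')).const_mul _

lemma gg_mul_integral (b b' : E3) : ∫ v : E3, gg b v * gg b' v = rexp ⟪b, b'⟫ := by
  simp_rw [gg_mul]
  rw [integral_const_mul _ _, gauss_integral, mul_mul_mul_comm,
    ← Real.rpow_add (by positivity : (0:ℝ) < 2*π),
    show (-(3:ℝ)/2) + (3:ℝ)/2 = 0 by norm_num, Real.rpow_zero, one_mul,
    ← Real.exp_add, norm_add_sq_real]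
  congr 1
  ring

lemma sq_diff_integrable (b b' : E3) :
    Integrable (fun v : E3 => (gg b v - gg b' v)^2) := by
  refine (((gg_mul_integrable b b).sub
      ((gg_mul_integrable b b').const_mul 2)).add (gg_mul_integrable b' b')).congr
    (Filter.Eventually.of_forall fun v => ?_)
  simp only [Pi.add_apply, Pi.sub_apply]
  ring

lemma sq_diff_integral (b b' : E3) :
    ∫ v : E3, (gg b v - gg b' v)^2
      = rexp (‖b‖^2) + rexp (‖b'‖^2) - 2 * rexp ⟪b, b'⟫ := by
  have h : ∀ v : E3, (gg b v - gg b' v)^2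
      = gg b v * gg b v - 2 * (gg b v * gg b' v) + gg b' v * gg b' v := fun v => by ring
  simp_rw [h]
  have I2 : Integrable (fun v : E3 => 2 * (gg b v * gg b' v)) (volume : Measure E3) :=
    (gg_mul_integrable b b').const_mul 2
  have I1 : Integrable (fun v : E3 => gg b v * gg b v - 2 * (gg b v * gg b' v))
      (volume : Measure E3) := (gg_mul_integrable b b).sub I2
  rw [integral_add I1 (gg_mul_integrable b' b'),
    integral_sub (gg_mul_integrable b b) I2,
    integral_const_mul _ _, gg_mul_integral, gg_mul_integral, gg_mul_integral,
    real_inner_self_eq_norm_sq, real_inner_self_eq_norm_sq]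
  ring

lemma abs_exp_sub_one_le' (s : ℝ) : |rexp s - 1| ≤ |s| * rexp |s| := by
  rcases le_or_gt 0 s with hs | hs
  · rw [abs_of_nonneg (sub_nonneg.2 (Real.one_le_exp hs)), abs_of_nonneg hs]
    have h2 := Real.add_one_le_exp (-s)
    have h3 : rexp (-s) * rexp s = 1 := by rw [← Real.exp_add]; simp
    nlinarith [Real.exp_pos s]
  · have h1 : rexp s ≤ 1 := by
      calc rexp s ≤ rexp 0 := Real.exp_le_exp.2 hs.le
      _ = 1 := Real.exp_zero
    rw [abs_of_nonpos (by linarith), abs_of_neg hs]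
    have h2 := Real.add_one_le_exp s
    have h3 : (1:ℝ) ≤ rexp (-s) := Real.one_le_exp (by linarith)
    nlinarith

lemma real_key (a t s : ℝ) (ha : 0 ≤ a) (ht : 0 ≤ t) (hs : |s| ≤ a * t) :
    rexp (a^2) + rexp (a^2 + (2*s + t^2)) - 2 * rexp (a^2 + s)
      ≤ 3 * t^2 * rexp (2*t^2 + 2*a^2) := by
  have habs_s : s ≤ a * t := (le_abs_self s).trans hs
  have habs_s' : -(a*t) ≤ s := by have := neg_abs_le s; linarith
  -- bound 1 : (exp s - 1)^2 ≤ 2 t² exp (a² + 2 t²)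
  have h1 : (rexp s - 1)^2 ≤ 2 * t^2 * rexp (a^2 + 2*t^2) := by
    have i1 := abs_exp_sub_one_le' s
    have i2 : (rexp s - 1)^2 ≤ (|s| * rexp |s|)^2 := by
      rw [← sq_abs (rexp s - 1)]
      exact pow_le_pow_left₀ (abs_nonneg _) i1 2
    have i3 : (|s| * rexp |s|)^2 = s^2 * (rexp |s| * rexp |s|) := by
      rw [mul_pow, sq_abs]; ring
    have i4 : rexp |s| * rexp |s| = rexp (2*|s|) := by rw [← Real.exp_add]; ring_nf
    have i5 : rexp (2*|s|) ≤ rexp (a^2/2 + 2*t^2) := by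
      apply Real.exp_le_exp.2
      nlinarith [sq_nonneg (a - 2*t), abs_nonneg s]
    have i6 : s^2 ≤ a^2 * t^2 := by nlinarith [abs_nonneg s, sq_abs s]
    have i7 : a^2 ≤ 2 * rexp (a^2/2) := by nlinarith [Real.add_one_le_exp (a^2/2)]
    have i8 : rexp (a^2 + 2*t^2) = rexp (a^2/2) * rexp (a^2/2 + 2*t^2) := by
      rw [← Real.exp_add]; congr 1; ring
    calc (rexp s - 1)^2 ≤ s^2 * rexp (2*|s|) := by rw [← i4, ← i3]; exact i2
    _ ≤ (a^2 * t^2) * rexp (a^2/2 + 2*t^2) := by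
        apply mul_le_mul i6 i5 (Real.exp_pos _).le (by positivity)
    _ ≤ (2 * rexp (a^2/2) * t^2) * rexp (a^2/2 + 2*t^2) := by
        apply mul_le_mul_of_nonneg_right _ (Real.exp_pos _).le
        nlinarith [Real.exp_pos (a^2/2)]
    _ = 2 * t^2 * rexp (a^2 + 2*t^2) := by rw [i8]; ring
  -- bound 2 : exp(2s) (exp(t²) - 1) ≤ t² exp (a² + 2 t²)
  have h2 : rexp s * rexp s * (rexp (t^2) - 1) ≤ t^2 * rexp (a^2 + 2*t^2) := by
    have j1 : rexp s * rexp s = rexp (2*s) := by rw [← Real.exp_add]; ring_nf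
    have j2 : rexp (2*s) ≤ rexp (a^2 + t^2) := by
      apply Real.exp_le_exp.2; nlinarith [sq_nonneg (a - t)]
    have j3 : rexp (t^2) - 1 ≤ t^2 * rexp (t^2) := by
      have := abs_exp_sub_one_le' (t^2)
      rw [abs_of_nonneg (by positivity : (0:ℝ) ≤ t^2)] at this
      have h0 : 0 ≤ rexp (t^2) - 1 := sub_nonneg.2 (Real.one_le_exp (by positivity))
      rw [abs_of_nonneg h0] at this
      exact this
    have j4 : 0 ≤ rexp (t^2) - 1 := sub_nonneg.2 (Real.one_le_exp (by positivity))
    calc rexp s * rexp s * (rexp (t^2) - 1)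
        ≤ rexp (a^2 + t^2) * (t^2 * rexp (t^2)) := by
          rw [j1]
          apply mul_le_mul j2 j3 j4 (Real.exp_pos _).le
    _ = t^2 * rexp (a^2 + 2*t^2) := by
          have e : rexp (a^2 + 2*t^2) = rexp (a^2 + t^2) * rexp (t^2) := by
            rw [← Real.exp_add]; congr 1; ring
          rw [e]; ring
  -- combine
  have hid : rexp (a^2) + rexp (a^2 + (2*s + t^2)) - 2 * rexp (a^2 + s)
      = rexp (a^2) * ((rexp s - 1)^2 + rexp s * rexp s * (rexp (t^2) - 1)) := by
    rw [Real.exp_add, Real.exp_add, Real.exp_add, two_mul, Real.exp_add]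
    ring
  have hfin : rexp (2*t^2 + 2*a^2) = rexp (a^2) * rexp (a^2 + 2*t^2) := by
    rw [← Real.exp_add]; congr 1; ring
  rw [hid, hfin]
  have hsum : (rexp s - 1)^2 + rexp s * rexp s * (rexp (t^2) - 1)
      ≤ 3 * t^2 * rexp (a^2 + 2*t^2) := by linarith
  calc rexp (a^2) * ((rexp s - 1)^2 + rexp s * rexp s * (rexp (t^2) - 1))
      ≤ rexp (a^2) * (3 * t^2 * rexp (a^2 + 2*t^2)) :=
        mul_le_mul_of_nonneg_left hsum (Real.exp_pos _).le
  _ = 3 * t^2 * (rexp (a^2) * rexp (a^2 + 2*t^2)) := by ring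

/-- The key inequality on Maxwellians. -/
lemma key_ineq (b1 b2 : E3) :
    rexp (‖b1‖^2) + rexp (‖b2‖^2) - 2 * rexp ⟪b1, b2⟫
      ≤ 3 * ‖b2 - b1‖^2 * rexp (2*‖b2 - b1‖^2 + 2*‖b1‖^2) := by
  have hb : ‖b2‖^2 = ‖b1‖^2 + (2*⟪b1, b2 - b1⟫ + ‖b2 - b1‖^2) := by
    have h := norm_add_sq_real b1 (b2 - b1)
    rw [add_sub_cancel] at h
    linarith
  have hin : ⟪b1, b2⟫ = ‖b1‖^2 + ⟪b1, b2 - b1⟫ := by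
    have h : ⟪b1, b1 + (b2 - b1)⟫ = ⟪b1, b1⟫ + ⟪b1, b2 - b1⟫ :=
      inner_add_right b1 b1 (b2 - b1)
    rw [add_sub_cancel, real_inner_self_eq_norm_sq] at h
    exact h
  rw [hb, hin]
  exact real_key ‖b1‖ ‖b2 - b1‖ ⟪b1, b2 - b1⟫ (norm_nonneg _) (norm_nonneg _)
    (abs_real_inner_le_norm b1 (b2 - b1))

lemma sqrt_maxw_zero (v : E3) :
    Real.sqrt (maxw 0 v) = (2*π) ^ (-(3:ℝ)/4) * rexp (-‖v‖^2/4) := by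
  unfold maxw
  rw [sub_zero, Real.sqrt_mul (by positivity) _, ← Real.exp_half,
    show ((2*π) ^ (-(3:ℝ)/2) : ℝ) = ((2*π) ^ (-(3:ℝ)/4) : ℝ)^2 by
      rw [← Real.rpow_natCast ((2*π) ^ (-(3:ℝ)/4)) 2, ← Real.rpow_mul (by positivity)]
      norm_num,
    Real.sqrt_sq (by positivity)]
  congr 1
  ring

lemma maxw_div_sqrt (b v : E3) : maxw b v / Real.sqrt (maxw 0 v) = gg b v := by
  rw [sqrt_maxw_zero]
  unfold maxw gg
  rw [mul_div_mul_comm, ← Real.rpow_sub (by positivity),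
    show (-(3:ℝ)/2) - (-(3:ℝ)/4) = -(3:ℝ)/4 by norm_num, ← Real.exp_sub]
  congr 1
  rw [Real.exp_eq_exp]
  have h := norm_sub_sq_real v b
  have h2 : ⟪v, b⟫ = ⟪b, v⟫ := real_inner_comm b v
  nlinarith

lemma sqrt_maxw_zero_pos (v : E3) : 0 < Real.sqrt (maxw 0 v) := by
  rw [sqrt_maxw_zero]; positivity

/-- The inner `L²` bound. -/
lemma inner_bound {ε : ℝ} (hε : 0 < ε) (b1 b2 : E3) :
    (eLpNorm (fun v : E3 =>
        (maxw b1 v - maxw b2 v) / (ε * Real.sqrt (maxw 0 v))) 2 (volume : Measure E3)).toReal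
      ≤ ε⁻¹ * (Real.sqrt 3 * ‖b2 - b1‖ * rexp (‖b2 - b1‖^2 + ‖b1‖^2)) := by
  have hfun : ∀ v : E3, (maxw b1 v - maxw b2 v) / (ε * Real.sqrt (maxw 0 v))
      = ε⁻¹ • (gg b1 v - gg b2 v) := by
    intro v
    rw [smul_eq_mul, ← maxw_div_sqrt b1 v, ← maxw_div_sqrt b2 v]
    have hs := sqrt_maxw_zero_pos v
    field_simp
  have hsmul : (fun v : E3 => (maxw b1 v - maxw b2 v) / (ε * Real.sqrt (maxw 0 v)))
      = ε⁻¹ • (fun v : E3 => gg b1 v - gg b2 v) := by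
    funext v; exact hfun v
  rw [hsmul, eLpNorm_const_smul]
  -- compute the eLpNorm of the difference
  set S : ℝ := ∫ v : E3, (gg b1 v - gg b2 v)^2 with hS
  have hSnn : 0 ≤ S := integral_nonneg fun v => sq_nonneg _
  have hval : eLpNorm (fun v : E3 => gg b1 v - gg b2 v) 2 (volume : Measure E3)
      = ENNReal.ofReal (Real.sqrt S) := by
    rw [eLpNorm_eq_lintegral_rpow_enorm_toReal two_ne_zero ENNReal.ofNat_ne_top]
    have htoReal : (2 : ℝ≥0∞).toReal = (2:ℝ) := by simp
    rw [htoReal]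
    have hpt : ∀ v : E3, (‖gg b1 v - gg b2 v‖ₑ) ^ (2:ℝ)
        = ENNReal.ofReal ((gg b1 v - gg b2 v)^2) := by
      intro v
      rw [← ofReal_norm_eq_enorm, ENNReal.ofReal_rpow_of_nonneg (norm_nonneg _) (by norm_num)]
      congr 1
      rw [show (2:ℝ) = ((2:ℕ):ℝ) by norm_num, Real.rpow_natCast,
        Real.norm_eq_abs, sq_abs]
    rw [lintegral_congr hpt,
      ← MeasureTheory.ofReal_integral_eq_lintegral_ofReal (sq_diff_integrable b1 b2)
        (Filter.Eventually.of_forall fun v => sq_nonneg _), ← hS,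
      ENNReal.ofReal_rpow_of_nonneg hSnn (by norm_num), ← Real.sqrt_eq_rpow]
  rw [hval]
  -- bound √S
  have hSle : S ≤ (Real.sqrt 3 * ‖b2 - b1‖ * rexp (‖b2 - b1‖^2 + ‖b1‖^2))^2 := by
    have h := key_ineq b1 b2
    rw [hS, sq_diff_integral]
    have hsq3 : (Real.sqrt 3)^2 = 3 := Real.sq_sqrt (by norm_num)
    have hexp : (rexp (‖b2 - b1‖^2 + ‖b1‖^2))^2 = rexp (2*‖b2 - b1‖^2 + 2*‖b1‖^2) := by
      rw [sq, ← Real.exp_add]; congr 1; ring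
    calc rexp (‖b1‖^2) + rexp (‖b2‖^2) - 2 * rexp ⟪b1, b2⟫
        ≤ 3 * ‖b2 - b1‖^2 * rexp (2*‖b2 - b1‖^2 + 2*‖b1‖^2) := h
      _ = (Real.sqrt 3 * ‖b2 - b1‖ * rexp (‖b2 - b1‖^2 + ‖b1‖^2))^2 := by
          rw [mul_pow, mul_pow, hsq3, hexp]
  have hsqrtle : Real.sqrt S ≤ Real.sqrt 3 * ‖b2 - b1‖ * rexp (‖b2 - b1‖^2 + ‖b1‖^2) := by
    have hnn : 0 ≤ Real.sqrt 3 * ‖b2 - b1‖ * rexp (‖b2 - b1‖^2 + ‖b1‖^2) := by positivity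
    calc Real.sqrt S ≤ Real.sqrt ((Real.sqrt 3 * ‖b2 - b1‖ * rexp (‖b2 - b1‖^2 + ‖b1‖^2))^2) :=
          Real.sqrt_le_sqrt hSle
      _ = _ := Real.sqrt_sq hnn
  have henorm : ‖ε⁻¹‖ₑ = ENNReal.ofReal ε⁻¹ := by
    rw [← ofReal_norm_eq_enorm, Real.norm_eq_abs, abs_of_pos (by positivity)]
  rw [henorm, ← ENNReal.ofReal_mul (by positivity)]
  apply ENNReal.toReal_le_of_le_ofReal (by positivity)
  exact ENNReal.ofReal_le_ofReal (mul_le_mul_of_nonneg_left hsqrtle (by positivity))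

lemma emb_norm (a : E2) : ‖emb a‖ = ‖a‖ := by
  unfold emb
  rw [EuclideanSpace.norm_eq, EuclideanSpace.norm_eq]
  congr 1
  rw [Fin.sum_univ_three, Fin.sum_univ_two]
  simp [EuclideanSpace.single_apply]

lemma emb_sub (a b : E2) : emb (a - b) = emb a - emb b := by
  unfold emb
  ext i
  fin_cases i <;> simp [EuclideanSpace.single_apply]

/-- there is a universal `C > 0` such that for all `p ∈ [1,∞]`, `ε ∈ (0,1]`
and bounded measurable `u, w : 𝕋² → ℝ²`,
`‖ ‖(M_{εŵ} − M_{εû})/(ε √M₀)‖_{L²_v} ‖_{L^p_x}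
  ≤ C ‖w − u‖_{L^p} exp(ε²‖u−w‖²_{L^∞} + ε²‖w‖²_{L^∞})`. -/
theorem stmt19 :
    ∃ C : ℝ, 0 < C ∧
      ∀ p : ℝ≥0∞, 1 ≤ p → ∀ ε : ℝ, 0 < ε → ε ≤ 1 →
      ∀ u w : ℝ × ℝ → E2,
        Measurable u → Measurable w → ZZper u → ZZper w →
        (∃ Bu : ℝ, ∀ x, ‖u x‖ ≤ Bu) → (∃ Bw : ℝ, ∀ x, ‖w x‖ ≤ Bw) →
        eLpNorm (fun x =>
            (eLpNorm (fun v : E3 =>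
                (maxw (ε • emb (w x)) v - maxw (ε • emb (u x)) v)
                  / (ε * Real.sqrt (maxw 0 v))) 2 (volume : Measure E3)).toReal) p μT
          ≤ ENNReal.ofReal
              (C * Real.exp (ε ^ 2 * ((eLpNorm (fun x => u x - w x) ⊤ μT).toReal) ^ 2
                  + ε ^ 2 * ((eLpNorm w ⊤ μT).toReal) ^ 2))
            * eLpNorm (fun x => w x - u x) p μT := by
  refine ⟨Real.sqrt 3, Real.sqrt_pos.2 (by norm_num), ?_⟩
  rintro p hp ε hε hε1 u w hu hw hup hwp ⟨Bu, hBu⟩ ⟨Bw, hBw⟩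
  set N1 : ℝ := (eLpNorm (fun x => u x - w x) ⊤ μT).toReal with hN1
  set N2 : ℝ := (eLpNorm w ⊤ μT).toReal with hN2
  have hfin1 : eLpNormEssSup (fun x => u x - w x) μT ≠ ⊤ :=
    ((eLpNormEssSup_le_of_ae_bound (C := Bu + Bw)
      (Filter.Eventually.of_forall fun x =>
        (norm_sub_le _ _).trans (add_le_add (hBu x) (hBw x)))).trans_lt
      ENNReal.ofReal_lt_top).ne
  have hfin2 : eLpNormEssSup w μT ≠ ⊤ :=
    ((eLpNormEssSup_le_of_ae_bound (C := Bw)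
      (Filter.Eventually.of_forall fun x => hBw x)).trans_lt ENNReal.ofReal_lt_top).ne
  have hae1 : ∀ᵐ x ∂μT, ‖u x - w x‖ ≤ N1 := by
    filter_upwards [ae_le_eLpNormEssSup (f := fun x => u x - w x) (μ := μT)] with x hx
    have h := ENNReal.toReal_mono hfin1 hx
    rw [hN1, eLpNorm_exponent_top]
    simpa using h
  have hae2 : ∀ᵐ x ∂μT, ‖w x‖ ≤ N2 := by
    filter_upwards [ae_le_eLpNormEssSup (f := w) (μ := μT)] with x hx
    have h := ENNReal.toReal_mono hfin2 hx
    rw [hN2, eLpNorm_exponent_top]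
    simpa using h
  have hmain : ∀ᵐ x ∂μT,
      ‖(eLpNorm (fun v : E3 =>
          (maxw (ε • emb (w x)) v - maxw (ε • emb (u x)) v)
            / (ε * Real.sqrt (maxw 0 v))) 2 (volume : Measure E3)).toReal‖
        ≤ (Real.sqrt 3 * Real.exp (ε ^ 2 * N1 ^ 2 + ε ^ 2 * N2 ^ 2)) * ‖w x - u x‖ := by
    filter_upwards [hae1, hae2] with x h1 h2
    have hb := inner_bound hε (ε • emb (w x)) (ε • emb (u x))
    have hd : ‖ε • emb (u x) - ε • emb (w x)‖ = ε * ‖u x - w x‖ := by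
      rw [← smul_sub, norm_smul, Real.norm_eq_abs, abs_of_pos hε, ← emb_sub, emb_norm]
    have hw' : ‖ε • emb (w x)‖ = ε * ‖w x‖ := by
      rw [norm_smul, Real.norm_eq_abs, abs_of_pos hε, emb_norm]
    rw [Real.norm_of_nonneg ENNReal.toReal_nonneg]
    refine hb.trans ?_
    rw [hd, hw']
    have hε2 : ε⁻¹ * (Real.sqrt 3 * (ε * ‖u x - w x‖)
          * rexp ((ε * ‖u x - w x‖) ^ 2 + (ε * ‖w x‖) ^ 2))
        = Real.sqrt 3 * ‖u x - w x‖
          * rexp (ε ^ 2 * ‖u x - w x‖ ^ 2 + ε ^ 2 * ‖w x‖ ^ 2) := by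
      rw [mul_pow, mul_pow]
      field_simp
    rw [hε2]
    have hexp : rexp (ε ^ 2 * ‖u x - w x‖ ^ 2 + ε ^ 2 * ‖w x‖ ^ 2)
        ≤ rexp (ε ^ 2 * N1 ^ 2 + ε ^ 2 * N2 ^ 2) := by
      apply Real.exp_le_exp.2
      have k1 : ‖u x - w x‖ ^ 2 ≤ N1 ^ 2 := by nlinarith [norm_nonneg (u x - w x)]
      have k2 : ‖w x‖ ^ 2 ≤ N2 ^ 2 := by nlinarith [norm_nonneg (w x)]
      nlinarith [sq_nonneg ε]
    calc Real.sqrt 3 * ‖u x - w x‖ * rexp (ε ^ 2 * ‖u x - w x‖ ^ 2 + ε ^ 2 * ‖w x‖ ^ 2)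
        ≤ Real.sqrt 3 * ‖u x - w x‖ * rexp (ε ^ 2 * N1 ^ 2 + ε ^ 2 * N2 ^ 2) := by
          apply mul_le_mul_of_nonneg_left hexp (by positivity)
      _ = (Real.sqrt 3 * Real.exp (ε ^ 2 * N1 ^ 2 + ε ^ 2 * N2 ^ 2)) * ‖w x - u x‖ := by
          rw [norm_sub_rev]; ring
  exact eLpNorm_le_mul_eLpNorm_of_ae_le_mul hmain p
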